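/- Let B be a real p×q matrix with p ≥ q ≥ 1 and n ≥ 1. Suppose x ∈ ℝ^p and y ∈ ℝ^q are not both zero and λ ∈ ℝ with λ ≠ 0 is such that C · v = λ · v, where v is the vector indexed by Fin p ⊕ (Fin n × Fin q) with v(inl i) = x i and v(inr (k,j)) = y j for all k. Then n − 1 − λ is an eigenvalue of C, i.e., there is a nonzero vector u with C · u = (n − 1 − λ) · u. -/
import Mathlib


open Matrix

/-- The matrix `C` of Construction III: indexed by `Fin p ⊕ (Fin n × Fin q)`,
first block row `[0, B, …, B]`, and the `n×n` grid of `q×q` blocks has zero diagonal blocks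
and identity blocks `I_q` off the diagonal. -/
def matC3 (p q n : ℕ) (B : Matrix (Fin p) (Fin q) ℝ) :
    Matrix (Fin p ⊕ Fin n × Fin q) (Fin p ⊕ Fin n × Fin q) ℝ :=
  Matrix.of fun a b =>
    match a, b with
    | Sum.inl i, Sum.inr (_, j) => B i j
    | Sum.inr (_, j), Sum.inl i => B i j
    | Sum.inr (k, j), Sum.inr (k', j') => if k ≠ k' ∧ j = j' then 1 else 0
    | _, _ => 0

/-- The matrix `D` of Construction III: indexed by `Fin q ⊕ (Fin n × Fin p)`,
first block row `[0, Bᵀ, …, Bᵀ]`, and the `n×n` grid of `p×p` blocks has zero diagonal blocks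
and identity blocks `I_p` off the diagonal. -/
def matD3 (p q n : ℕ) (B : Matrix (Fin p) (Fin q) ℝ) :
    Matrix (Fin q ⊕ Fin n × Fin p) (Fin q ⊕ Fin n × Fin p) ℝ :=
  Matrix.of fun a b =>
    match a, b with
    | Sum.inl j, Sum.inr (_, i) => B i j
    | Sum.inr (_, i), Sum.inl j => B i j
    | Sum.inr (k, i), Sum.inr (k', i') => if k ≠ k' ∧ i = i' then 1 else 0
    | _, _ => 0

lemma matC3_mulVec_inl (p q n : ℕ) (B : Matrix (Fin p) (Fin q) ℝ)
    (u : Fin p ⊕ Fin n × Fin q → ℝ) (i : Fin p) :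
    (matC3 p q n B *ᵥ u) (Sum.inl i) = ∑ k : Fin n, ∑ j : Fin q, B i j * u (Sum.inr (k, j)) := by
  simp [matC3, mulVec, dotProduct, Fintype.sum_sum_type, Fintype.sum_prod_type]

lemma matC3_mulVec_inr (p q n : ℕ) (B : Matrix (Fin p) (Fin q) ℝ)
    (u : Fin p ⊕ Fin n × Fin q → ℝ) (k : Fin n) (j : Fin q) :
    (matC3 p q n B *ᵥ u) (Sum.inr (k, j)) =
      (∑ i : Fin p, B i j * u (Sum.inl i)) +
        ∑ k' : Fin n, if k' ≠ k then u (Sum.inr (k', j)) else 0 := by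
  simp only [matC3, mulVec, dotProduct, Fintype.sum_sum_type, Fintype.sum_prod_type, of_apply]
  congr 1
  refine Finset.sum_congr rfl fun k' _ => ?_
  by_cases hk : k' = k
  · subst hk; simp
  · simp [hk, Ne.symm hk, ite_and, Finset.sum_ite_eq]

lemma sum_ite_ne_const (n : ℕ) (k : Fin n) (c : ℝ) :
    ∑ k' : Fin n, (if k' ≠ k then c else 0) = ((n : ℝ) - 1) * c := by
  have h : ∀ k' : Fin n, (if k' ≠ k then c else 0) = c - (if k' = k then c else 0) := by
    intro k'; by_cases h : k' = k <;> simp [h]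
  simp only [h, Finset.sum_sub_distrib, Finset.sum_const, Finset.card_univ, Fintype.card_fin,
    nsmul_eq_mul, Finset.sum_ite_eq', Finset.mem_univ, if_true]
  ring

lemma exists_ker_transpose (p q : ℕ) (hpq : q ≤ p) (B : Matrix (Fin p) (Fin q) ℝ)
    (y : Fin q → ℝ) (hy : y ≠ 0) (hBy : B *ᵥ y = 0) :
    ∃ x' : Fin p → ℝ, x' ≠ 0 ∧ Bᵀ *ᵥ x' = 0 := by
  have hker : y ∈ LinearMap.ker B.mulVecLin := by
    simp [LinearMap.mem_ker, Matrix.mulVecLin_apply, hBy]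
  have hkne : LinearMap.ker B.mulVecLin ≠ ⊥ := fun h => hy (by simpa [h] using hker)
  have h1 := LinearMap.finrank_range_add_finrank_ker B.mulVecLin
  have h2 : 0 < Module.finrank ℝ (LinearMap.ker B.mulVecLin) := by
    rcases Nat.eq_zero_or_pos (Module.finrank ℝ (LinearMap.ker B.mulVecLin)) with h | h
    · exact absurd (Submodule.finrank_eq_zero.mp h) hkne
    · exact h
  have hrank : B.rank < q := by
    have : B.rank + Module.finrank ℝ (LinearMap.ker B.mulVecLin) = q := by
      simpa [Matrix.rank] using h1
    omega
  have hrankT : Bᵀ.rank < p := lt_of_lt_of_le (by rw [Matrix.rank_transpose]; exact hrank) hpq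
  have h3 := LinearMap.finrank_range_add_finrank_ker Bᵀ.mulVecLin
  have h4 : Bᵀ.rank + Module.finrank ℝ (LinearMap.ker Bᵀ.mulVecLin) = p := by
    simpa [Matrix.rank] using h3
  have h5 : LinearMap.ker Bᵀ.mulVecLin ≠ ⊥ := by
    intro h
    rw [Submodule.finrank_eq_zero.mpr h] at h4
    omega
  obtain ⟨x', hx'mem, hx'ne⟩ := Submodule.ne_bot_iff _ |>.mp h5
  refine ⟨x', hx'ne, ?_⟩
  rw [← Matrix.mulVecLin_apply]
  exact hx'mem

/-- If `(x, y, …, y)` (not zero) is an eigenvector of `C` with eigenvalue `λ ≠ 0`, then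
`n − 1 − λ` is also an eigenvalue of `C`. -/
theorem matC3_eigenvalue_reflection (p q n : ℕ) (hq : 1 ≤ q) (hpq : q ≤ p) (hn : 1 ≤ n)
    (B : Matrix (Fin p) (Fin q) ℝ) (x : Fin p → ℝ) (y : Fin q → ℝ) (l : ℝ) (hl : l ≠ 0)
    (hxy : ¬(x = 0 ∧ y = 0))
    (hev : matC3 p q n B *ᵥ Sum.elim x (fun kj => y kj.2) =
      l • Sum.elim x (fun kj => y kj.2)) :
    ∃ u : Fin p ⊕ Fin n × Fin q → ℝ, u ≠ 0 ∧
      matC3 p q n B *ᵥ u = ((n : ℝ) - 1 - l) • u := by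
  -- the two eigen-equations
  have hx : ∀ i, (n : ℝ) * ∑ j, B i j * y j = l * x i := by
    intro i
    have h := congrFun hev (Sum.inl i)
    rw [matC3_mulVec_inl] at h
    simpa [Finset.sum_const, nsmul_eq_mul] using h
  have hy : ∀ j, (∑ i, B i j * x i) + ((n : ℝ) - 1) * y j = l * y j := by
    intro j
    have h := congrFun hev (Sum.inr (⟨0, hn⟩, j))
    rw [matC3_mulVec_inr] at h
    simp only [Sum.elim_inl, Sum.elim_inr, Pi.smul_apply, smul_eq_mul] at h
    rw [sum_ite_ne_const] at h
    exact h
  by_cases hx0 : x = 0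
  · -- degenerate case: x = 0, y ≠ 0, l = n - 1, eigenvalue n-1-l = 0
    have hy0 : y ≠ 0 := fun h => hxy ⟨hx0, h⟩
    have hBy : B *ᵥ y = 0 := by
      funext i
      have := hx i
      rw [hx0] at this
      simp only [Pi.zero_apply, mul_zero] at this
      have hn0 : (n : ℝ) ≠ 0 := Nat.cast_ne_zero.mpr (by omega)
      have : ∑ j, B i j * y j = 0 := by
        rcases mul_eq_zero.mp this with h | h
        · exact absurd h hn0
        · exact h
      simpa [mulVec, dotProduct]
    have hl' : l = (n : ℝ) - 1 := by
      obtain ⟨j, hj⟩ := Function.ne_iff.mp hy0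
      have := hy j
      rw [hx0] at this
      simp only [Pi.zero_apply, mul_zero, Finset.sum_const_zero, zero_add] at this
      rcases mul_eq_mul_right_iff.mp this with h | h
      · exact h.symm
      · exact absurd h hj
    obtain ⟨x', hx'ne, hx'⟩ := exists_ker_transpose p q hpq B y hy0 hBy
    refine ⟨Sum.elim x' 0, ?_, ?_⟩
    · intro h
      apply hx'ne
      funext i
      exact congrFun h (Sum.inl i)
    · have hcoef : (n : ℝ) - 1 - l = 0 := by rw [hl']; ring
      rw [hcoef, zero_smul]
      funext a
      match a with
      | Sum.inl i =>
        rw [matC3_mulVec_inl]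
        simp
      | Sum.inr (k, j) =>
        rw [matC3_mulVec_inr]
        have : ∑ i, B i j * x' i = 0 := by
          have := congrFun hx' j
          simpa [mulVec, dotProduct, transpose_apply] using this
        simp [this]
  · -- main case: x ≠ 0, u = (l x, (n-1-l) y, ..., (n-1-l) y)
    refine ⟨Sum.elim (fun i => l * x i) (fun kj => ((n : ℝ) - 1 - l) * y kj.2), ?_, ?_⟩
    · obtain ⟨i, hi⟩ := Function.ne_iff.mp hx0
      intro h
      have := congrFun h (Sum.inl i)
      simp only [Sum.elim_inl, Pi.zero_apply, mul_eq_zero] at this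
      rcases this with h' | h'
      · exact hl h'
      · exact hi h'
    · funext a
      match a with
      | Sum.inl i =>
        rw [matC3_mulVec_inl]
        simp only [Sum.elim_inr, Pi.smul_apply, Sum.elim_inl, smul_eq_mul]
        have : ∀ k : Fin n, ∑ j, B i j * (((n : ℝ) - 1 - l) * y j) =
            ((n : ℝ) - 1 - l) * ∑ j, B i j * y j := by
          intro k
          rw [Finset.mul_sum]
          exact Finset.sum_congr rfl fun j _ => by ring
        rw [Finset.sum_congr rfl fun k _ => this k]
        simp only [Finset.sum_const, Finset.card_univ, Fintype.card_fin, nsmul_eq_mul]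
        linear_combination ((n : ℝ) - 1 - l) * hx i
      | Sum.inr (k, j) =>
        rw [matC3_mulVec_inr]
        simp only [Sum.elim_inl, Sum.elim_inr, Pi.smul_apply, smul_eq_mul, sum_ite_ne_const]
        have hT : ∑ i, B i j * (l * x i) = l * ∑ i, B i j * x i := by
          rw [Finset.mul_sum]
          exact Finset.sum_congr rfl fun i _ => by ring
        rw [hT]
        linear_combination l * hy j
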